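/- Let p be a prime and let a, b ∈ ℚ be nonzero. Suppose the only solution (x, y, z) ∈ ℚ_p³ of z² = a·x² + b·y² is (0, 0, 0) (i.e., the quaternion algebra H_{a,b} is ramified at p). Let s ∈ ℤ_p be such that X² − s̄·X + 1 is irreducible in 𝔽_p[X], where s̄ ∈ 𝔽_p is the reduction of s modulo p. Then there exist x₁, x₂, x₃, x₄ ∈ ℚ_p with x₁² − a·x₂² − b·x₃² + a·b·x₄² = 1 and 2x₁ = s. -/

import Mathlib

open Polynomial


-- Hensel square root
lemma sq_lift {p : ℕ} [Fact p.Prime] (u c : ℤ_[p]) (h : ‖c^2 - u‖ < ‖2*c‖^2) :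
    ∃ r : ℤ_[p], r^2 = u := by
  have hF : ((X^2 - C u : Polynomial ℤ_[p]).eval c) = c^2 - u := by simp
  have hF' : ((X^2 - C u : Polynomial ℤ_[p]).derivative.eval c) = 2*c := by
    simp [derivative_sub, derivative_pow]
  have h2 : ‖(X^2 - C u : Polynomial ℤ_[p]).eval c‖ <
      ‖(X^2 - C u : Polynomial ℤ_[p]).derivative.eval c‖^2 := by
    rw [hF, hF']; exact h
  obtain ⟨z, hz, -⟩ := hensels_lemma h2
  refine ⟨z, ?_⟩
  have h3 : z^2 - u = 0 := by simpa using hz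
  linear_combination h3


lemma toZMod_eq_zero_iff {p : ℕ} [Fact p.Prime] (x : ℤ_[p]) :
    PadicInt.toZMod x = 0 ↔ (p : ℤ_[p]) ∣ x := by
  rw [← RingHom.mem_ker, PadicInt.ker_toZMod, PadicInt.maximalIdeal_eq_span_p,
    Ideal.mem_span_singleton]

lemma unit_norm {p : ℕ} [Fact p.Prime] (x : ℤ_[p]) (hx : PadicInt.toZMod x ≠ 0) : ‖x‖ = 1 := by
  rcases lt_or_eq_of_le (PadicInt.norm_le_one x) with h | h
  · exact absurd ((toZMod_eq_zero_iff x).2 ((PadicInt.norm_lt_one_iff_dvd x).1 h)) hx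
  · exact h

lemma two_unit_norm {p : ℕ} [Fact p.Prime] (hp : p ≠ 2) : ‖(2 : ℤ_[p])‖ = 1 := by
  apply unit_norm
  have : ((2 : ℕ) : ZMod p) ≠ 0 := by
    rw [Ne, ZMod.natCast_eq_zero_iff]
    intro h
    exact hp ((Nat.prime_dvd_prime_iff_eq (Fact.out) Nat.prime_two).1 h)
  have h2 : PadicInt.toZMod (2 : ℤ_[p]) = ((2:ℕ) : ZMod p) := by
    rw [show ((2:ℤ_[p])) = ((2:ℕ):ℤ_[p]) by norm_num, map_natCast]
  rw [h2]; exact this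

-- p odd: unit with square reduction is a square
lemma sq_of_residue {p : ℕ} [Fact p.Prime] (hp : p ≠ 2) (u : ℤ_[p])
    (hu : PadicInt.toZMod u ≠ 0) (hsq : IsSquare (PadicInt.toZMod u)) :
    ∃ r : ℤ_[p], r^2 = u := by
  obtain ⟨c₀, hc₀⟩ := hsq
  have hc₀ne : c₀ ≠ 0 := by rintro rfl; simp at hc₀; exact hu (by simp [hc₀])
  set c : ℤ_[p] := ((c₀.val : ℕ) : ℤ_[p]) with hc
  have hcz : PadicInt.toZMod c = c₀ := by
    rw [hc, map_natCast, ZMod.natCast_val, ZMod.cast_id]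
  apply sq_lift u c
  have h1 : ‖c^2 - u‖ < 1 := by
    rw [PadicInt.norm_lt_one_iff_dvd, ← toZMod_eq_zero_iff]
    rw [map_sub, map_pow, hcz, hc₀]
    ring
  have h2 : ‖2*c‖ = 1 := by
    rw [norm_mul, two_unit_norm hp, one_mul]
    exact unit_norm c (by rw [hcz]; exact hc₀ne)
  rw [h2]; simpa using h1

-- p = 2 : 1 mod 8 is a square
lemma sq8 (u : ℤ_[2]) (h : (8 : ℤ_[2]) ∣ 1 - u) : ∃ r : ℤ_[2], r^2 = u := by
  apply sq_lift u 1
  have h1 : ‖(1:ℤ_[2])^2 - u‖ ≤ (8:ℝ)⁻¹ := by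
    obtain ⟨k, hk⟩ := h
    calc ‖(1:ℤ_[2])^2 - u‖ = ‖(8:ℤ_[2])‖ * ‖k‖ := by rw [← norm_mul, ← hk]; norm_num
    _ ≤ (8:ℝ)⁻¹ * 1 := by
        apply mul_le_mul _ (PadicInt.norm_le_one k) (norm_nonneg k) (by norm_num)
        have h2n : ‖(2:ℤ_[2])‖ = 2⁻¹ := by simpa using (PadicInt.norm_p (p := 2))
        rw [show (8:ℤ_[2]) = 2*(2*2) by norm_num, norm_mul, norm_mul, h2n]
        norm_num
    _ = (8:ℝ)⁻¹ := by ring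
  have h2 : ‖(2 : ℤ_[2]) * 1‖ = 2⁻¹ := by simpa using (PadicInt.norm_p (p := 2))
  rw [h2]; calc ‖(1:ℤ_[2])^2 - u‖ ≤ (8:ℝ)⁻¹ := h1
  _ < (2⁻¹)^2 := by norm_num

-- product of two nonsquares in ZMod p is a square
lemma nonsq_mul_nonsq {p : ℕ} [Fact p.Prime] (a b : ZMod p) (ha : a ≠ 0) (hb : b ≠ 0)
    (hna : ¬ IsSquare a) (hnb : ¬ IsSquare b) : IsSquare (a * b) := by
  have h1 : quadraticChar (ZMod p) a = -1 := quadraticChar_neg_one_iff_not_isSquare.2 hna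
  have h2 : quadraticChar (ZMod p) b = -1 := quadraticChar_neg_one_iff_not_isSquare.2 hnb
  have h3 : quadraticChar (ZMod p) (a*b) = 1 := by rw [map_mul, h1, h2]; ring
  exact (quadraticChar_one_iff_isSquare (mul_ne_zero ha hb)).1 h3


lemma toZMod_eq_zero_iff' {p : ℕ} [Fact p.Prime] (x : ℤ_[p]) :
    PadicInt.toZMod x = 0 ↔ (p : ℤ_[p]) ∣ x := by
  rw [← RingHom.mem_ker, PadicInt.ker_toZMod, PadicInt.maximalIdeal_eq_span_p,
    Ideal.mem_span_singleton]

lemma toZMod_ne_zero_of_norm_one {p : ℕ} [Fact p.Prime] (x : ℤ_[p]) (hx : ‖x‖ = 1) :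
    PadicInt.toZMod x ≠ 0 := by
  intro h
  have := (toZMod_eq_zero_iff' x).1 h
  have h2 : ‖x‖ < 1 := (PadicInt.norm_lt_one_iff_dvd x).2 this
  rw [hx] at h2; exact absurd h2 (lt_irrefl 1)

lemma decomp {p : ℕ} [Fact p.Prime] (x : ℚ_[p]) (hx : x ≠ 0) :
    ∃ (u : ℤ_[p]) (A : ℚ_[p]), PadicInt.toZMod u ≠ 0 ∧ A ≠ 0 ∧
      (x = (u : ℚ_[p]) * A^2 ∨ x = (p : ℚ_[p]) * (u : ℚ_[p]) * A^2) := by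
  have hp1 : (1:ℝ) < p := by exact_mod_cast (Fact.out : p.Prime).one_lt
  have hp0 : (p:ℚ_[p]) ≠ 0 := by exact_mod_cast (Fact.out : p.Prime).ne_zero
  set k := x.valuation with hk
  set u' := x * (p:ℚ_[p])^(-k) with hu'
  have hnu : ‖u'‖ = 1 := by
    rw [hu', norm_mul, Padic.norm_eq_zpow_neg_valuation hx, Padic.norm_p_zpow]
    rw [← zpow_add₀ (by positivity : (p:ℝ) ≠ 0)]
    simp [← hk]
  have hle : ‖u'‖ ≤ 1 := le_of_eq hnu
  set u : ℤ_[p] := ⟨u', hle⟩ with hu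
  have hcoe : (u : ℚ_[p]) = u' := rfl
  have hxu : x = (u : ℚ_[p]) * (p:ℚ_[p])^k := by
    rw [hcoe, hu', mul_assoc, ← zpow_add₀ hp0]
    simp
  have hne : PadicInt.toZMod u ≠ 0 := toZMod_ne_zero_of_norm_one u (by rw [PadicInt.norm_def, hcoe, hnu])
  rcases Int.even_or_odd k with ⟨m, hm⟩ | ⟨m, hm⟩
  · refine ⟨u, (p:ℚ_[p])^m, hne, zpow_ne_zero _ hp0, Or.inl ?_⟩
    have hsq : ((p:ℚ_[p])^m)^2 = (p:ℚ_[p])^(m+m) := by rw [sq, ← zpow_add₀ hp0]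
    rw [hxu, hm, hsq]
  · refine ⟨u, (p:ℚ_[p])^m, hne, zpow_ne_zero _ hp0, Or.inr ?_⟩
    have hsq : ((p:ℚ_[p])^m)^2 = (p:ℚ_[p])^(m+m) := by rw [sq, ← zpow_add₀ hp0]
    have h1 : (p:ℚ_[p])^(2*m+1) = (p:ℚ_[p]) * (p:ℚ_[p])^(m+m) := by
      rw [show (p:ℚ_[p]) * (p:ℚ_[p])^(m+m) = (p:ℚ_[p])^(1:ℤ) * (p:ℚ_[p])^(m+m) by rw [zpow_one],
        ← zpow_add₀ hp0]
      ring_nf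
    rw [hxu, hm, hsq, h1]
    ring



lemma zmod2_ne_zero {p : ℕ} [Fact p.Prime] (hp : p ≠ 2) : (2 : ZMod p) ≠ 0 := by
  have : ((2 : ℕ) : ZMod p) ≠ 0 := by
    rw [Ne, ZMod.natCast_eq_zero_iff]
    intro h
    exact hp ((Nat.prime_dvd_prime_iff_eq (Fact.out) Nat.prime_two).1 h)
  simpa using this

lemma disc_not_sq {p : ℕ} [Fact p.Prime] (hp : p ≠ 2) (sb : ZMod p)
    (hs : Irreducible (X ^ 2 - C sb * X + 1 : (ZMod p)[X])) :
    ¬ IsSquare (sb^2 - 4) := by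
  rintro ⟨t, ht⟩
  have h2 : (2 : ZMod p) ≠ 0 := zmod2_ne_zero hp
  set r : ZMod p := (sb + t) * 2⁻¹ with hr
  set r' : ZMod p := (sb - t) * 2⁻¹ with hr'
  have hsum : sb = r + r' := by
    rw [hr, hr']; field_simp; ring
  have hprod : (1 : ZMod p) = r * r' := by
    rw [hr, hr']; field_simp; linear_combination -ht
  have hfac : (X ^ 2 - C sb * X + 1 : (ZMod p)[X]) = (X - C r) * (X - C r') := by
    have e1 : ((X - C r) * (X - C r') : (ZMod p)[X])
        = X^2 - (C r + C r') * X + C r * C r' := by ring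
    rw [e1, ← map_add, ← map_mul, ← hsum, ← hprod, map_one]
  rcases hs.2 hfac with h | h
  · exact Polynomial.not_isUnit_X_sub_C r h
  · exact Polynomial.not_isUnit_X_sub_C r' h

lemma sbar_one (s : ℤ_[2])
    (hs : Irreducible (X ^ 2 - C (PadicInt.toZMod s) * X + 1 : (ZMod 2)[X])) :
    PadicInt.toZMod s = 1 := by
  have hcases : ∀ t : ZMod 2, t = 0 ∨ t = 1 := by decide
  rcases hcases (PadicInt.toZMod s) with h | h
  · exfalso
    rw [h] at hs
    have hfac : (X ^ 2 - C (0 : ZMod 2) * X + 1 : (ZMod 2)[X]) = (X - C 1) * (X - C 1) := by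
      have h2 : (2 : (ZMod 2)[X]) = 0 := by
        rw [show (2 : (ZMod 2)[X]) = C 1 + C 1 by rw [map_one]; ring, ← map_add,
          show (1:ZMod 2)+1 = 0 by decide, map_zero]
      simp only [map_zero, map_one]
      linear_combination (X : (ZMod 2)[X]) * h2
    rcases hs.2 hfac with h | h <;> exact Polynomial.not_isUnit_X_sub_C 1 h
  · exact h

lemma parity2 (x : ℤ_[2]) : (∃ t, x = 2*t) ∨ (∃ t, x = 2*t+1) := by
  have hcases : ∀ t : ZMod 2, t = 0 ∨ t = 1 := by decide
  have h2 : ((2:ℕ) : ℤ_[2]) = (2 : ℤ_[2]) := by norm_cast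
  rcases hcases (PadicInt.toZMod x) with h | h
  · left
    obtain ⟨t, ht⟩ := (toZMod_eq_zero_iff' x).1 h
    exact ⟨t, by rw [ht, h2]⟩
  · right
    have h0 : PadicInt.toZMod (x - 1) = 0 := by rw [map_sub, map_one, h]; ring
    obtain ⟨t, ht⟩ := (toZMod_eq_zero_iff' (x-1)).1 h0
    exact ⟨t, by rw [← h2]; linear_combination ht⟩

lemma s_sq_form (s : ℤ_[2]) (h : PadicInt.toZMod s = 1) :
    ∃ w : ℤ_[2], s^2 - 4 = 8*w - 3 := by
  have h0 : PadicInt.toZMod (s - 1) = 0 := by rw [map_sub, map_one, h]; ring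
  have h2 : ((2:ℕ) : ℤ_[2]) = (2 : ℤ_[2]) := by norm_cast
  obtain ⟨t, ht⟩ := (toZMod_eq_zero_iff' (s-1)).1 h0
  rw [h2] at ht
  rcases parity2 t with ⟨w, hw⟩ | ⟨w, hw⟩
  · exact ⟨w + 2*w^2, by linear_combination (s+1+2*t)*ht + (4+4*t+8*w)*hw⟩
  · exact ⟨1 + 3*w + 2*w^2, by linear_combination (s+1+2*t)*ht + (4*t+8*w+8)*hw⟩


section
variable {p : ℕ} [Fact p.Prime]

-- copies (will concatenate finally); reference t2/t3/t4 names
end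

-- assume previous lemmas available by axioms for speed of testing:

lemma toZMod_intCast_two (n : ℤ) : PadicInt.toZMod ((n : ℤ_[2])) = ((n : ZMod 2)) := by
  rw [map_intCast]

lemma odd_unit2 (n : ℤ) (hn : n % 2 = 1) : PadicInt.toZMod ((n:ℤ_[2])) ≠ 0 := by
  rw [toZMod_intCast_two, Ne, ZMod.intCast_zmod_eq_zero_iff_dvd]
  omega

lemma class_of_mod8 (u : ℤ_[2]) (n : ℤ) (hn : n % 2 = 1) (h : (8:ℤ_[2]) ∣ (n : ℤ_[2]) - u) :
    ∃ ρ : ℤ_[2], u = (n:ℤ_[2]) * ρ^2 := by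
  have hU : IsUnit ((n:ℤ_[2])) := PadicInt.isUnit_iff.2 (unit_norm _ (odd_unit2 n hn))
  obtain ⟨uu, huu⟩ := hU
  set w : ℤ_[2] := ((uu⁻¹ : ℤ_[2]ˣ) : ℤ_[2]) with hw
  have hnw : (n:ℤ_[2]) * w = 1 := by rw [← huu, hw]; exact_mod_cast uu.mul_inv
  have hdvd : (8:ℤ_[2]) ∣ 1 - u*w := by
    obtain ⟨k, hk⟩ := h
    exact ⟨k*w, by linear_combination w*hk - hnw⟩
  obtain ⟨r, hr⟩ := sq8 (u*w) hdvd
  exact ⟨r, by linear_combination (n:ℤ_[2])*hr.symm - u*hnw⟩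

lemma class2 (u : ℤ_[2]) (hu0 : PadicInt.toZMod u = 1) :
    ∃ (n : ℤ) (ρ : ℤ_[2]), (n = 1 ∨ n = 3 ∨ n = 5 ∨ n = 7) ∧ u = (n:ℤ_[2]) * ρ^2 := by
  have h0 : PadicInt.toZMod (u - 1) = 0 := by rw [map_sub, map_one, hu0]; ring
  have h2 : ((2:ℕ) : ℤ_[2]) = (2 : ℤ_[2]) := by norm_cast
  obtain ⟨t, ht0⟩ := (toZMod_eq_zero_iff' (u-1)).1 h0
  rw [h2] at ht0
  have ht : u = 1 + 2*t := by linear_combination ht0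
  rcases parity2 t with ⟨t1, ht1⟩ | ⟨t1, ht1⟩ <;> rcases parity2 t1 with ⟨w, hw⟩ | ⟨w, hw⟩
  · -- u = 1 + 8w
    refine ⟨1, ?_⟩
    obtain ⟨ρ, hρ⟩ := class_of_mod8 u 1 (by norm_num) ⟨-w, by push_cast; linear_combination -ht - 2*ht1 - 4*hw⟩
    exact ⟨ρ, Or.inl rfl, hρ⟩
  · -- t = 2t1, t1 = 2w+1 : u = 1+4(2w+1) = 5 + 8w
    refine ⟨5, ?_⟩
    obtain ⟨ρ, hρ⟩ := class_of_mod8 u 5 (by norm_num) ⟨-w, by push_cast; linear_combination -ht - 2*ht1 - 4*hw⟩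
    exact ⟨ρ, Or.inr (Or.inr (Or.inl rfl)), hρ⟩
  · -- t = 2t1+1, t1 = 2w : u = 3 + 8w
    refine ⟨3, ?_⟩
    obtain ⟨ρ, hρ⟩ := class_of_mod8 u 3 (by norm_num) ⟨-w, by push_cast; linear_combination -ht - 2*ht1 - 4*hw⟩
    exact ⟨ρ, Or.inr (Or.inl rfl), hρ⟩
  · -- u = 1 + 2(2(2w+1)+1) = 7 + 8w
    refine ⟨7, ?_⟩
    obtain ⟨ρ, hρ⟩ := class_of_mod8 u 7 (by norm_num) ⟨-w, by push_cast; linear_combination -ht - 2*ht1 - 4*hw⟩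
    exact ⟨ρ, Or.inr (Or.inr (Or.inr rfl)), hρ⟩

lemma core_odd {p : ℕ} [Fact p.Prime] (hp : p ≠ 2) (s : ℤ_[p])
    (hdisc : ¬ IsSquare ((PadicInt.toZMod s)^2 - 4))
    (α β : ℚ_[p])
    (hram' : ∀ x y z : ℚ_[p], z^2 = α*x^2 + β*y^2 → x = 0 ∧ y = 0 ∧ z = 0)
    (u : ℤ_[p]) (A : ℚ_[p]) (hu : PadicInt.toZMod u ≠ 0) (hA : A ≠ 0)
    (hα : α = (u : ℚ_[p]) * A^2) :
    ∃ x y z : ℚ_[p], α*x^2 + β*y^2 - α*β*z^2 = ((s : ℚ_[p])^2 - 4)/4 := by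
  by_cases hsqu : IsSquare (PadicInt.toZMod u)
  · exfalso
    obtain ⟨r, hr⟩ := sq_of_residue hp u hu hsqu
    have hrq : ((r : ℚ_[p]))^2 = (u : ℚ_[p]) := by exact_mod_cast congrArg _ hr
    have hsol : ((r:ℚ_[p]))^2 = α*(1/A)^2 + β*0^2 := by
      rw [hα, hrq]; field_simp; ring
    obtain ⟨h1, -, -⟩ := hram' (1/A) 0 (r : ℚ_[p]) hsol
    exact one_div_ne_zero hA h1
  · -- u is a nonsquare unit
    have hU : IsUnit u := PadicInt.isUnit_iff.2 (unit_norm u hu)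
    obtain ⟨uu, huu⟩ := hU
    set v : ℤ_[p] := ((uu⁻¹ : ℤ_[p]ˣ) : ℤ_[p]) with hv
    have huv : u * v = 1 := by rw [← huu, hv]; exact_mod_cast uu.mul_inv
    have hvbar : PadicInt.toZMod v ≠ 0 := by
      intro h
      have : PadicInt.toZMod u * PadicInt.toZMod v = 1 := by rw [← map_mul, huv, map_one]
      rw [h, mul_zero] at this; exact zero_ne_one this
    have hvnotsq : ¬ IsSquare (PadicInt.toZMod v) := by
      rintro ⟨c, hc⟩
      apply hsqu
      have hc0 : c ≠ 0 := by rintro rfl; rw [mul_zero] at hc; exact hvbar hc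
      refine ⟨c⁻¹, ?_⟩
      have huvb : PadicInt.toZMod u * (c * c) = 1 := by
        rw [← hc, ← map_mul, huv, map_one]
      field_simp
      linear_combination huvb
    have hd0 : (PadicInt.toZMod s)^2 - 4 ≠ 0 := by
      intro h; exact hdisc ⟨0, by rw [h]; ring⟩
    have hwsq : IsSquare (PadicInt.toZMod ((s^2 - 4) * v)) := by
      rw [map_mul]
      have : PadicInt.toZMod (s^2-4) = (PadicInt.toZMod s)^2 - 4 := by
        rw [map_sub, map_pow, map_ofNat]
      rw [this]
      exact nonsq_mul_nonsq _ _ hd0 hvbar hdisc hvnotsq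
    have hwne : PadicInt.toZMod ((s^2-4)*v) ≠ 0 := by
      rw [map_mul]
      have : PadicInt.toZMod (s^2-4) = (PadicInt.toZMod s)^2 - 4 := by
        rw [map_sub, map_pow, map_ofNat]
      rw [this]
      exact mul_ne_zero hd0 hvbar
    obtain ⟨r, hr⟩ := sq_of_residue hp _ hwne hwsq
    refine ⟨(r : ℚ_[p]) / (2*A), 0, 0, ?_⟩
    have hrq : ((r:ℚ_[p]))^2 = ((s:ℚ_[p])^2 - 4) * (v : ℚ_[p]) := by
      have := congrArg (fun t : ℤ_[p] => (t : ℚ_[p])) hr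
      push_cast at this
      exact this
    have huvq : (u:ℚ_[p]) * (v:ℚ_[p]) = 1 := by exact_mod_cast congrArg (fun t : ℤ_[p] => (t:ℚ_[p])) huv
    have key : (u:ℚ_[p]) * ((r:ℚ_[p]))^2 = (s:ℚ_[p])^2 - 4 := by
      linear_combination (u:ℚ_[p])*hrq + ((s:ℚ_[p])^2-4)*huvq
    rw [hα]
    field_simp
    linear_combination 4*key


lemma int_sq2 (n : ℤ) (h : (8:ℤ) ∣ 1 - n) : ∃ w : ℚ_[2], w^2 = (n:ℚ_[2]) := by
  obtain ⟨k, hk⟩ := h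
  obtain ⟨r, hr⟩ := sq8 (n:ℤ_[2]) ⟨(k:ℤ_[2]), by exact_mod_cast congrArg (fun t : ℤ => (t : ℤ_[2])) hk⟩
  refine ⟨(r : ℚ_[2]), ?_⟩
  exact_mod_cast congrArg (fun t : ℤ_[2] => (t : ℚ_[2])) hr

lemma wit2 (s : ℤ_[2]) (hsf : ∃ w : ℤ_[2], s^2 - 4 = 8*w - 3)
    (na m : ℤ) (A B : ℚ_[2]) (hA : A ≠ 0) (hB : B ≠ 0)
    (x₀ y₀ z₀ t : ℤ) (hteq : na*x₀^2 + m*y₀^2 - na*m*z₀^2 = t)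
    (ht8 : (8:ℤ) ∣ t + 3) (htodd : t % 2 = 1) :
    ∃ x y z : ℚ_[2], ((na:ℚ_[2])*A^2)*x^2 + ((m:ℚ_[2])*B^2)*y^2
      - ((na:ℚ_[2])*A^2)*((m:ℚ_[2])*B^2)*z^2 = ((s:ℚ_[2])^2 - 4)/4 := by
  obtain ⟨w, hw⟩ := hsf
  obtain ⟨k, hk⟩ := ht8
  have hU : IsUnit ((t:ℤ_[2])) := PadicInt.isUnit_iff.2 (unit_norm _ (odd_unit2 t htodd))
  obtain ⟨uu, huu⟩ := hU
  set w' : ℤ_[2] := ((uu⁻¹ : ℤ_[2]ˣ) : ℤ_[2]) with hw'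
  have htw : (t:ℤ_[2]) * w' = 1 := by rw [← huu, hw']; exact_mod_cast uu.mul_inv
  have hk2 : ((t:ℤ_[2]) + 3) = 8 * (k:ℤ_[2]) := by
    exact_mod_cast congrArg (fun x : ℤ => (x:ℤ_[2])) hk
  have hdvd : (8:ℤ_[2]) ∣ 1 - (s^2-4)*w' := by
    refine ⟨(k:ℤ_[2])*w' - w*w', ?_⟩
    linear_combination w'*hk2 - w'*hw - htw
  obtain ⟨r, hr⟩ := sq8 _ hdvd
  have key : ((r:ℚ_[2]))^2 * (t:ℚ_[2]) = (s:ℚ_[2])^2 - 4 := by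
    have h1 : (r^2) * (t:ℤ_[2]) = (s^2-4) * (w' * t) := by linear_combination (t:ℤ_[2])*hr
    rw [mul_comm w' _, htw, mul_one] at h1
    exact_mod_cast congrArg (fun x : ℤ_[2] => (x : ℚ_[2])) h1
  have hteqq : (na:ℚ_[2])*(x₀:ℚ_[2])^2 + (m:ℚ_[2])*(y₀:ℚ_[2])^2
      - (na:ℚ_[2])*(m:ℚ_[2])*(z₀:ℚ_[2])^2 = (t:ℚ_[2]) := by exact_mod_cast hteq
  refine ⟨(x₀:ℚ_[2])*(r:ℚ_[2])/(2*A), (y₀:ℚ_[2])*(r:ℚ_[2])/(2*B),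
    (z₀:ℚ_[2])*(r:ℚ_[2])/(2*A*B), ?_⟩
  field_simp
  linear_combination (4*((r:ℚ_[2]))^2)*hteqq + 4*key


lemma contra2 (α β : ℚ_[2])
    (hram' : ∀ x y z : ℚ_[2], z^2 = α*x^2 + β*y^2 → x = 0 ∧ y = 0 ∧ z = 0)
    (na m : ℤ) (A B : ℚ_[2]) (hA : A ≠ 0) (hB : B ≠ 0)
    (hα : α = (na:ℚ_[2])*A^2) (hβ : β = (m:ℚ_[2])*B^2)
    (x₀ y₀ : ℤ) (hx₀ : x₀ ≠ 0) (w : ℚ_[2])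
    (hw : w^2 = (na:ℚ_[2])*(x₀:ℚ_[2])^2 + (m:ℚ_[2])*(y₀:ℚ_[2])^2) : False := by
  have hsol : w^2 = α*((x₀:ℚ_[2])/A)^2 + β*((y₀:ℚ_[2])/B)^2 := by
    rw [hα, hβ]
    field_simp
    linear_combination hw
  obtain ⟨h1, -, -⟩ := hram' _ _ _ hsol
  rw [_root_.div_eq_zero_iff] at h1
  rcases h1 with h | h
  · exact hx₀ (by exact_mod_cast h)
  · exact hA h

lemma core_two (s : ℤ_[2]) (hsf : ∃ w : ℤ_[2], s^2 - 4 = 8*w - 3)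
    (α β : ℚ_[2])
    (hram' : ∀ x y z : ℚ_[2], z^2 = α*x^2 + β*y^2 → x = 0 ∧ y = 0 ∧ z = 0)
    (u v : ℤ_[2]) (A B : ℚ_[2]) (hu : PadicInt.toZMod u ≠ 0) (hv : PadicInt.toZMod v ≠ 0)
    (hA : A ≠ 0) (hB : B ≠ 0)
    (hα : α = (u:ℚ_[2]) * A^2)
    (hβ : β = (v:ℚ_[2]) * B^2 ∨ β = 2 * (v:ℚ_[2]) * B^2) :
    ∃ x y z : ℚ_[2], α*x^2 + β*y^2 - α*β*z^2 = ((s:ℚ_[2])^2 - 4)/4 := by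
  have hz2 : ∀ t : ZMod 2, t = 0 ∨ t = 1 := by decide
  obtain ⟨na, ρa, hna, hua⟩ := class2 u ((hz2 _).resolve_left hu)
  obtain ⟨nb, ρb, hnb, hvb⟩ := class2 v ((hz2 _).resolve_left hv)
  have hρa : (ρa : ℚ_[2]) ≠ 0 := by
    intro h
    have h0 : ρa = 0 := PadicInt.coe_eq_zero.1 h
    have : u = 0 := by rw [hua, h0]; ring
    rw [this, map_zero] at hu; exact hu rfl
  have hρb : (ρb : ℚ_[2]) ≠ 0 := by
    intro h
    have h0 : ρb = 0 := PadicInt.coe_eq_zero.1 h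
    have : v = 0 := by rw [hvb, h0]; ring
    rw [this, map_zero] at hv; exact hv rfl
  set A' : ℚ_[2] := A * (ρa:ℚ_[2]) with hA'def
  set B' : ℚ_[2] := B * (ρb:ℚ_[2]) with hB'def
  have hA' : A' ≠ 0 := mul_ne_zero hA hρa
  have hB' : B' ≠ 0 := mul_ne_zero hB hρb
  have hα' : α = ((na:ℤ):ℚ_[2]) * A'^2 := by
    rw [hα, hua, hA'def]; push_cast; ring
  obtain ⟨m, hm, hβ'⟩ : ∃ m : ℤ, (m = nb ∨ m = 2*nb) ∧ β = ((m:ℤ):ℚ_[2]) * B'^2 := by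
    rcases hβ with h | h
    · exact ⟨nb, Or.inl rfl, by rw [h, hvb, hB'def]; push_cast; ring⟩
    · exact ⟨2*nb, Or.inr rfl, by rw [h, hvb, hB'def]; push_cast; ring⟩
  clear hα hβ hua hvb hu hv
  rcases hna with rfl | rfl | rfl | rfl
  · exact (contra2 α β hram' 1 m A' B' hA' hB' hα' hβ' 1 0 (by norm_num) 1
      (by push_cast; norm_num)).elim
  · rcases hm with rfl | rfl <;> rcases hnb with rfl | rfl | rfl | rfl
    · refine (contra2 α β hram' 3 (1) A' B' hA' hB' hα' hβ' 1 1 (by norm_num) ((2:ℚ_[2])) ?_).elim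
      push_cast
      norm_num
    · rw [hα', hβ']
      exact wit2 s hsf 3 (3) A' B' hA' hB' 1 1 1 (-3) (by norm_num) (by norm_num) (by norm_num)
    · obtain ⟨w, hw⟩ := int_sq2 17 (by norm_num)
      refine (contra2 α β hram' 3 (5) A' B' hA' hB' hα' hβ' 2 1 (by norm_num) w ?_).elim
      rw [hw]; push_cast; norm_num
    · rw [hα', hβ']
      exact wit2 s hsf 3 (7) A' B' hA' hB' 1 1 1 (-11) (by norm_num) (by norm_num) (by norm_num)
    · rw [hα', hβ']
      exact wit2 s hsf 3 (2*1) A' B' hA' hB' 1 1 0 (5) (by norm_num) (by norm_num) (by norm_num)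
    · refine (contra2 α β hram' 3 (2*3) A' B' hA' hB' hα' hβ' 1 1 (by norm_num) ((3:ℚ_[2])) ?_).elim
      push_cast
      norm_num
    · rw [hα', hβ']
      exact wit2 s hsf 3 (2*5) A' B' hA' hB' 1 1 0 (13) (by norm_num) (by norm_num) (by norm_num)
    · obtain ⟨w, hw⟩ := int_sq2 17 (by norm_num)
      refine (contra2 α β hram' 3 (2*7) A' B' hA' hB' hα' hβ' 1 1 (by norm_num) w ?_).elim
      rw [hw]; push_cast; norm_num
  · rw [hα', hβ']
    exact wit2 s hsf 5 m A' B' hA' hB' 1 0 0 5 (by ring) (by norm_num) (by norm_num)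
  · rcases hm with rfl | rfl <;> rcases hnb with rfl | rfl | rfl | rfl
    · refine (contra2 α β hram' 7 (1) A' B' hA' hB' hα' hβ' 1 3 (by norm_num) ((4:ℚ_[2])) ?_).elim
      push_cast
      norm_num
    · rw [hα', hβ']
      exact wit2 s hsf 7 (3) A' B' hA' hB' 1 1 1 (-11) (by norm_num) (by norm_num) (by norm_num)
    · obtain ⟨w, hw⟩ := int_sq2 33 (by norm_num)
      refine (contra2 α β hram' 7 (5) A' B' hA' hB' hα' hβ' 2 1 (by norm_num) w ?_).elim
      rw [hw]; push_cast; norm_num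
    · rw [hα', hβ']
      exact wit2 s hsf 7 (7) A' B' hA' hB' 1 1 1 (-35) (by norm_num) (by norm_num) (by norm_num)
    · refine (contra2 α β hram' 7 (2*1) A' B' hA' hB' hα' hβ' 1 1 (by norm_num) ((3:ℚ_[2])) ?_).elim
      push_cast
      norm_num
    · rw [hα', hβ']
      exact wit2 s hsf 7 (2*3) A' B' hA' hB' 1 1 0 (13) (by norm_num) (by norm_num) (by norm_num)
    · obtain ⟨w, hw⟩ := int_sq2 17 (by norm_num)
      refine (contra2 α β hram' 7 (2*5) A' B' hA' hB' hα' hβ' 1 1 (by norm_num) w ?_).elim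
      rw [hw]; push_cast; norm_num
    · rw [hα', hβ']
      exact wit2 s hsf 7 (2*7) A' B' hA' hB' 1 1 0 (21) (by norm_num) (by norm_num) (by norm_num)
/-- Lemma (local `S_{a,b}`, ramified case, lower bound): if `H_{a,b}` is
ramified at `p` and `s ∈ ℤ_p` has reduction `s̄ ∈ 𝔽_p` with `X² - s̄·X + 1`
irreducible, then `s` is a reduced trace of a reduced-norm-1 element of
`H_{a,b} ⊗ ℚ_p`, i.e. `red_p⁻¹(U_p) ⊆ S_{a,b}(ℚ_p)`. -/
theorem ramified_quaternion_trace_of_irreducible_reduction (p : ℕ) [Fact p.Prime]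
    (a b : ℚ) (ha : a ≠ 0) (hb : b ≠ 0)
    (hram : ∀ x y z : ℚ_[p],
      z ^ 2 = (a : ℚ_[p]) * x ^ 2 + (b : ℚ_[p]) * y ^ 2 → x = 0 ∧ y = 0 ∧ z = 0)
    (s : ℤ_[p])
    (hs : Irreducible (X ^ 2 - C (PadicInt.toZMod s) * X + 1 : (ZMod p)[X])) :
    ∃ x₁ x₂ x₃ x₄ : ℚ_[p],
      x₁ ^ 2 - (a : ℚ_[p]) * x₂ ^ 2 - (b : ℚ_[p]) * x₃ ^ 2 +
        (a : ℚ_[p]) * (b : ℚ_[p]) * x₄ ^ 2 = 1 ∧ 2 * x₁ = (s : ℚ_[p]) := by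
  have haq : (a:ℚ_[p]) ≠ 0 := by exact_mod_cast ha
  have hbq : (b:ℚ_[p]) ≠ 0 := by exact_mod_cast hb
  have key : ∃ x y z : ℚ_[p], (a:ℚ_[p])*x^2 + (b:ℚ_[p])*y^2 - (a:ℚ_[p])*(b:ℚ_[p])*z^2
      = ((s:ℚ_[p])^2 - 4)/4 := by
    obtain ⟨u, A, hu, hA, hau⟩ := decomp (a:ℚ_[p]) haq
    obtain ⟨v, B, hv, hB, hbv⟩ := decomp (b:ℚ_[p]) hbq
    by_cases hp2 : p = 2
    · subst hp2
      have hsf := s_sq_form s (sbar_one s hs)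
      have h2c : (((2:ℕ)):ℚ_[2]) = 2 := by norm_num
      rw [h2c] at hau hbv
      rcases hau with hau | hau
      · exact core_two s hsf _ _ hram u v A B hu hv hA hB hau hbv
      · rcases hbv with hbv | hbv
        · have hram2 : ∀ x y z : ℚ_[2],
              z^2 = (b:ℚ_[2])*x^2 + (a:ℚ_[2])*y^2 → x = 0 ∧ y = 0 ∧ z = 0 := by
            intro x y z h
            obtain ⟨h1,h2,h3⟩ := hram y x z (by linear_combination h)
            exact ⟨h2,h1,h3⟩
          obtain ⟨x,y,z,hxyz⟩ := core_two s hsf _ _ hram2 v u B A hv hu hB hA hbv (Or.inr hau)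
          exact ⟨y,x,z, by linear_combination hxyz⟩
        · have hram3 : ∀ x y z : ℚ_[2],
              z^2 = (-((a:ℚ_[2])*(b:ℚ_[2])))*x^2 + (a:ℚ_[2])*y^2 → x = 0 ∧ y = 0 ∧ z = 0 := by
            intro x y z h
            obtain ⟨h1,h2,h3⟩ := hram z ((a:ℚ_[2])*x) ((a:ℚ_[2])*y)
              (by linear_combination (-(a:ℚ_[2]))*h)
            refine ⟨?_, ?_, h1⟩
            · rcases mul_eq_zero.1 h2 with h' | h'
              · exact absurd h' haq
              · exact h'
            · rcases mul_eq_zero.1 h3 with h' | h'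
              · exact absurd h' haq
              · exact h'
          have hmul : -((a:ℚ_[2])*(b:ℚ_[2])) = ((-(u*v) : ℤ_[2]):ℚ_[2]) * ((2:ℚ_[2])*A*B)^2 := by
            rw [hau, hbv]; push_cast; ring
          have huv : PadicInt.toZMod (-(u*v)) ≠ 0 := by
            rw [map_neg, map_mul]
            intro h
            exact (mul_ne_zero hu hv) (by rwa [neg_eq_zero] at h)
          obtain ⟨x,y,z,hxyz⟩ := core_two s hsf _ _ hram3 (-(u*v)) u ((2:ℚ_[2])*A*B) A huv hu
            (mul_ne_zero (mul_ne_zero two_ne_zero hA) hB) hA hmul (Or.inr hau)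
          exact ⟨y, (a:ℚ_[2])*z, x, by linear_combination hxyz⟩
    · have hdisc := disc_not_sq hp2 _ hs
      have hpq : (p:ℚ_[p]) ≠ 0 := by
        exact_mod_cast (Nat.cast_ne_zero (R := ℚ_[p])).2 (Fact.out : p.Prime).ne_zero
      rcases hau with hau | hau
      · exact core_odd hp2 s hdisc _ _ hram u A hu hA hau
      · rcases hbv with hbv | hbv
        · have hram2 : ∀ x y z : ℚ_[p],
              z^2 = (b:ℚ_[p])*x^2 + (a:ℚ_[p])*y^2 → x = 0 ∧ y = 0 ∧ z = 0 := by
            intro x y z h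
            obtain ⟨h1,h2,h3⟩ := hram y x z (by linear_combination h)
            exact ⟨h2,h1,h3⟩
          obtain ⟨x,y,z,hxyz⟩ := core_odd hp2 s hdisc _ _ hram2 v B hv hB hbv
          exact ⟨y,x,z, by linear_combination hxyz⟩
        · have hram3 : ∀ x y z : ℚ_[p],
              z^2 = (-((a:ℚ_[p])*(b:ℚ_[p])))*x^2 + (a:ℚ_[p])*y^2 → x = 0 ∧ y = 0 ∧ z = 0 := by
            intro x y z h
            obtain ⟨h1,h2,h3⟩ := hram z ((a:ℚ_[p])*x) ((a:ℚ_[p])*y)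
              (by linear_combination (-(a:ℚ_[p]))*h)
            refine ⟨?_, ?_, h1⟩
            · rcases mul_eq_zero.1 h2 with h' | h'
              · exact absurd h' haq
              · exact h'
            · rcases mul_eq_zero.1 h3 with h' | h'
              · exact absurd h' haq
              · exact h'
          have hmul : -((a:ℚ_[p])*(b:ℚ_[p])) = ((-(u*v) : ℤ_[p]):ℚ_[p]) * ((p:ℚ_[p])*A*B)^2 := by
            rw [hau, hbv]; push_cast; ring
          have huv : PadicInt.toZMod (-(u*v)) ≠ 0 := by
            rw [map_neg, map_mul]
            intro h
            exact (mul_ne_zero hu hv) (by rwa [neg_eq_zero] at h)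
          obtain ⟨x,y,z,hxyz⟩ := core_odd hp2 s hdisc _ _ hram3 (-(u*v)) ((p:ℚ_[p])*A*B) huv
            (mul_ne_zero (mul_ne_zero hpq hA) hB) hmul
          exact ⟨y, (a:ℚ_[p])*z, x, by linear_combination hxyz⟩
  obtain ⟨x,y,z,hxyz⟩ := key
  exact ⟨(s:ℚ_[p])/2, x, y, z, by linear_combination -hxyz, by ring⟩
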